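/- Let ε ∈ (0,1), C ≥ 1, f ∈ ℕ, δ ∈ (0,1) with f²δ < 1, and set p(n) = n^{−δ}, m(n) = ⌊Cn⌋. In the bipartite random graph G(m(n), n, p(n)), the probability of the event that there exist pairwise disjoint nonempty sets X_1,...,X_k ⊆ A and Y_1,...,Y_k ⊆ B with k ≥ εn, all of size at most f, such that no pair (i,j) has X_i completely joined to Y_j, is at most exp(ln((C+1)n+1)·(C+1)n − ε²·n^{2−f²δ}), which tends to 0 as n → ∞. -/

import Mathlib

open MeasureTheory ENNReal

noncomputable def bernoulliMeasure (p : ℝ≥0∞) : Measure Bool :=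
  p • Measure.dirac true + (1 - p) • Measure.dirac false

/-- The random bipartite graph `G(m,n,p)` with parts `A = Fin m`, `B = Fin n`. -/
noncomputable def bipRandom (m n : ℕ) (p : ℝ≥0∞) : Measure ((Fin m × Fin n) → Bool) :=
  Measure.pi fun _ => bernoulliMeasure p

lemma bern_true (p : ℝ≥0∞) : bernoulliMeasure p {true} = p := by
  simp [bernoulliMeasure, Measure.dirac_apply]

lemma bern_univ (p : ℝ≥0∞) (hp : p ≤ 1) : bernoulliMeasure p Set.univ = 1 := by
  simp [bernoulliMeasure, Measure.dirac_apply]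
  exact add_tsub_cancel_of_le hp

lemma bern_prob (p : ℝ≥0∞) (hp : p ≤ 1) : IsProbabilityMeasure (bernoulliMeasure p) :=
  ⟨bern_univ p hp⟩

lemma block_bound (p : ℝ≥0∞) (hp : p ≤ 1) : ∀ (N : ℕ) {κ ι : Type} [Fintype ι]
    (Q : Finset κ) (_ : Q.card = N) (S : κ → Finset ι)
    (_ : ∀ q ∈ Q, ∀ q' ∈ Q, q ≠ q' → Disjoint (S q) (S q')),
    Measure.pi (fun _ : ι => bernoulliMeasure p) {ω | ∀ q ∈ Q, ∃ c ∈ S q, ω c = false}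
      ≤ ∏ q ∈ Q, (1 - p ^ (S q).card) := by
  haveI := bern_prob p hp
  intro N
  induction N with
  | zero =>
    intro κ ι _ Q hQ S _
    rw [Finset.card_eq_zero] at hQ
    subst hQ
    simp only [Finset.notMem_empty, false_implies, implies_true, Set.setOf_true,
      Finset.prod_empty, measure_univ, le_refl]
  | succ N ih =>
    intro κ ι _ Q hQ S hdisj
    classical
    have hne : Q.Nonempty := Finset.card_pos.mp (by omega)
    obtain ⟨q0, hq0⟩ := hne
    set Q' := Q.erase q0 with hQ'
    have hcard' : Q'.card = N := by rw [hQ', Finset.card_erase_of_mem hq0, hQ]; omega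
    letI : Fintype {i // i ∈ S q0} := Subtype.fintype _
    have hmp := measurePreserving_piEquivPiSubtypeProd
      (fun _ : ι => bernoulliMeasure p) (· ∈ S q0)
    set φ := MeasurableEquiv.piEquivPiSubtypeProd (fun _ : ι => Bool) (· ∈ S q0) with hφ
    set μ1 := Measure.pi (fun _ : {i // i ∈ S q0} => bernoulliMeasure p) with hμ1
    set μ2 := Measure.pi (fun _ : {i // ¬ i ∈ S q0} => bernoulliMeasure p) with hμ2
    set A : Set ({i // i ∈ S q0} → Bool) := {g | ∃ c, g c = false} with hA
    set S' : κ → Finset {i // ¬ i ∈ S q0} :=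
      fun q => (S q).subtype (fun i => ¬ i ∈ S q0) with hS'
    set B : Set ({i // ¬ i ∈ S q0} → Bool) := {h | ∀ q ∈ Q', ∃ c ∈ S' q, h c = false} with hB
    have hAm : MeasurableSet A := by
      have : A = ⋃ c, (fun g : {i // i ∈ S q0} → Bool => g c) ⁻¹' {false} := by
        ext g; simp [hA]
      rw [this]
      exact MeasurableSet.iUnion fun c => measurable_pi_apply c (measurableSet_singleton false)
    have hBm : MeasurableSet B := by
      have : B = ⋂ q ∈ Q', ⋃ c ∈ S' q, (fun h : {i // ¬ i ∈ S q0} → Bool => h c) ⁻¹' {false} := by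
        ext h; simp [hB]
      rw [this]
      exact MeasurableSet.biInter (Q' : Set κ).to_countable fun q _ =>
        MeasurableSet.biUnion (Set.to_countable _) fun c _ =>
          measurable_pi_apply c (measurableSet_singleton false)
    have hsub : {ω : ι → Bool | ∀ q ∈ Q, ∃ c ∈ S q, ω c = false} ⊆ φ ⁻¹' (A ×ˢ B) := by
      intro ω hω
      simp only [Set.mem_preimage, Set.mem_prod]
      constructor
      · obtain ⟨c, hc, hcf⟩ := hω q0 hq0
        exact ⟨⟨c, hc⟩, hcf⟩
      · intro q hq
        obtain ⟨c, hc, hcf⟩ := hω q (Finset.mem_of_mem_erase hq)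
        have hcn : ¬ c ∈ S q0 := by
          have hd := hdisj q (Finset.mem_of_mem_erase hq) q0 hq0 (Finset.ne_of_mem_erase hq)
          exact fun h => (Finset.disjoint_left.mp hd hc) h
        exact ⟨⟨c, hcn⟩, Finset.mem_subtype.mpr hc, hcf⟩
    have hμ1A : μ1 A = 1 - p ^ (S q0).card := by
      have hcompl : A = (Set.pi Set.univ (fun _ : {i // i ∈ S q0} => ({true} : Set Bool)))ᶜ := by
        ext g
        simp [hA, Set.mem_pi]
      rw [hcompl, prob_compl_eq_one_sub (MeasurableSet.univ_pi fun _ =>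
        measurableSet_singleton true), hμ1, Measure.pi_pi]
      simp [bern_true, Finset.prod_const]
    have hμ2B : μ2 B ≤ ∏ q ∈ Q', (1 - p ^ (S q).card) := by
      have hd' : ∀ q ∈ Q', ∀ q' ∈ Q', q ≠ q' → Disjoint (S' q) (S' q') := by
        intro q hq q' hq' hne
        rw [Finset.disjoint_left]
        intro c hc hc'
        exact Finset.disjoint_left.mp
          (hdisj q (Finset.mem_of_mem_erase hq) q' (Finset.mem_of_mem_erase hq') hne)
          (Finset.mem_subtype.mp hc) (Finset.mem_subtype.mp hc')
      have := ih Q' hcard' S' hd'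
      refine le_trans this (le_of_eq (Finset.prod_congr rfl fun q hq => ?_))
      have hcards : (S' q).card = (S q).card := by
        rw [hS']
        simp only [Finset.card_subtype]
        congr 1
        apply Finset.filter_true_of_mem
        intro x hx
        exact fun h => Finset.disjoint_left.mp
          (hdisj q (Finset.mem_of_mem_erase hq) q0 hq0 (Finset.ne_of_mem_erase hq)) hx h
      rw [hcards]
    calc Measure.pi (fun _ : ι => bernoulliMeasure p) {ω | ∀ q ∈ Q, ∃ c ∈ S q, ω c = false}
        ≤ Measure.pi (fun _ : ι => bernoulliMeasure p) (φ ⁻¹' (A ×ˢ B)) := measure_mono hsub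
      _ = (μ1.prod μ2) (A ×ˢ B) := by
          rw [hμ1, hμ2]; exact hmp.measure_preimage (hAm.prod hBm).nullMeasurableSet
      _ = μ1 A * μ2 B := Measure.prod_prod A B
      _ ≤ (1 - p ^ (S q0).card) * ∏ q ∈ Q', (1 - p ^ (S q).card) := by
          rw [hμ1A]; gcongr
      _ = ∏ q ∈ Q, (1 - p ^ (S q).card) := by rw [hQ']; exact Finset.mul_prod_erase Q (fun q => 1 - p ^ (S q).card) hq0

def fibA (m n : ℕ) (a : Fin m → Fin (n+1)) (l : Fin n) : Finset (Fin m) :=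
  Finset.univ.filter (fun x => a x = l.succ)

def fibB (n : ℕ) (b : Fin n → Fin (n+1)) (l : Fin n) : Finset (Fin n) :=
  Finset.univ.filter (fun y => b y = l.succ)

def goodT (m n : ℕ) (a : Fin m → Fin (n+1)) (b : Fin n → Fin (n+1)) : Finset (Fin n) :=
  Finset.univ.filter fun l => (fibA m n a l).Nonempty ∧ (fibB n b l).Nonempty

def badEvent (m n f t : ℕ) (a : Fin m → Fin (n+1)) (b : Fin n → Fin (n+1)) :
    Set ((Fin m × Fin n) → Bool) :=
  {ω | ((∀ l, (fibA m n a l).card ≤ f ∧ (fibB n b l).card ≤ f) ∧ t ≤ (goodT m n a b).card) ∧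
    ∀ l ∈ goodT m n a b, ∀ l' ∈ goodT m n a b,
      ∃ x ∈ fibA m n a l, ∃ y ∈ fibB n b l', ω (x, y) = false}

lemma labeling_bound (m n f t : ℕ) (p : ℝ≥0∞) (hp : p ≤ 1)
    (a : Fin m → Fin (n+1)) (b : Fin n → Fin (n+1)) :
    bipRandom m n p (badEvent m n f t a b) ≤ (1 - p ^ (f*f)) ^ (t*t) := by
  classical
  by_cases hcond : (∀ l, (fibA m n a l).card ≤ f ∧ (fibB n b l).card ≤ f)
      ∧ t ≤ (goodT m n a b).card
  · set T := goodT m n a b with hT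
    have hsub : badEvent m n f t a b ⊆
        {ω : (Fin m × Fin n) → Bool | ∀ q ∈ T ×ˢ T,
          ∃ c ∈ (fibA m n a q.1) ×ˢ (fibB n b q.2), ω c = false} := by
      rintro ω ⟨-, hω⟩ q hq
      rw [Finset.mem_product] at hq
      obtain ⟨x, hx, y, hy, hf⟩ := hω q.1 hq.1 q.2 hq.2
      exact ⟨(x, y), Finset.mem_product.mpr ⟨hx, hy⟩, hf⟩
    have hdisj : ∀ q ∈ T ×ˢ T, ∀ q' ∈ T ×ˢ T, q ≠ q' →
        Disjoint ((fibA m n a q.1) ×ˢ (fibB n b q.2)) ((fibA m n a q'.1) ×ˢ (fibB n b q'.2)) := by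
      intro q _ q' _ hne
      rw [Finset.disjoint_left]
      rintro ⟨x, y⟩ hc hc'
      rw [Finset.mem_product] at hc hc'
      apply hne
      have h1 : q.1 = q'.1 := by
        have h := (Finset.mem_filter.mp hc.1).2
        have h' := (Finset.mem_filter.mp hc'.1).2
        exact Fin.succ_injective _ (h ▸ h'.symm ▸ rfl)
      have h2 : q.2 = q'.2 := by
        have h := (Finset.mem_filter.mp hc.2).2
        have h' := (Finset.mem_filter.mp hc'.2).2
        exact Fin.succ_injective _ (h ▸ h'.symm ▸ rfl)
      exact Prod.ext h1 h2
    calc bipRandom m n p (badEvent m n f t a b)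
        ≤ bipRandom m n p {ω : (Fin m × Fin n) → Bool | ∀ q ∈ T ×ˢ T,
            ∃ c ∈ (fibA m n a q.1) ×ˢ (fibB n b q.2), ω c = false} := measure_mono hsub
      _ ≤ ∏ q ∈ T ×ˢ T, (1 - p ^ ((fibA m n a q.1) ×ˢ (fibB n b q.2)).card) :=
          block_bound p hp _ _ rfl _ hdisj
      _ ≤ ∏ _q ∈ T ×ˢ T, (1 - p ^ (f*f)) := by
          apply Finset.prod_le_prod' 
          intro q _
          apply tsub_le_tsub_left
          apply pow_le_pow_of_le_one zero_le hp
          rw [Finset.card_product]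
          exact Nat.mul_le_mul (hcond.1 q.1).1 (hcond.1 q.2).2
      _ = (1 - p ^ (f*f)) ^ (T.card * T.card) := by
          rw [Finset.prod_const, Finset.card_product]
      _ ≤ (1 - p ^ (f*f)) ^ (t*t) := by
          apply pow_le_pow_of_le_one zero_le tsub_le_self
          exact Nat.mul_le_mul hcond.2 hcond.2
  · have : badEvent m n f t a b = ∅ := by
      rw [Set.eq_empty_iff_forall_notMem]
      rintro ω ⟨hc, -⟩
      exact hcond hc
    rw [this]
    simp

lemma exists_labeling {m n k f t : ℕ} (hk : k ≤ n) (ht : t ≤ k)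
    (X : Fin k → Finset (Fin m)) (Y : Fin k → Finset (Fin n))
    (hX : ∀ i, (X i).Nonempty) (hY : ∀ j, (Y j).Nonempty)
    (dX : ∀ i j, i ≠ j → Disjoint (X i) (X j)) (dY : ∀ i j, i ≠ j → Disjoint (Y i) (Y j))
    (cX : ∀ i, (X i).card ≤ f) (cY : ∀ j, (Y j).card ≤ f)
    (ω : (Fin m × Fin n) → Bool)
    (hbad : ∀ i j, ∃ x ∈ X i, ∃ y ∈ Y j, ω (x, y) = false) :
    ∃ a b, ω ∈ badEvent m n f t a b := by
  classical
  set a : Fin m → Fin (n+1) :=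
    fun x => if h : ∃ i, x ∈ X i then (h.choose.castLE hk).succ else 0 with ha
  set b : Fin n → Fin (n+1) :=
    fun y => if h : ∃ j, y ∈ Y j then (h.choose.castLE hk).succ else 0 with hb
  have fibA_eq : ∀ l : Fin n, fibA m n a l =
      if h : (l : ℕ) < k then X ⟨l.1, h⟩ else ∅ := by
    intro l
    ext x
    simp only [fibA, Finset.mem_filter, Finset.mem_univ, true_and, ha]
    constructor
    · intro hx
      by_cases h : ∃ i, x ∈ X i
      · rw [dif_pos h] at hx
        have h1 : (h.choose.castLE hk) = l := Fin.succ_injective _ hx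
        have hlk : (l : ℕ) < k := by
          rw [← h1]; exact h.choose.2
        rw [dif_pos hlk]
        have : h.choose = ⟨l.1, hlk⟩ := by
          apply Fin.ext
          simpa using congrArg Fin.val h1
        exact this ▸ h.choose_spec
      · rw [dif_neg h] at hx
        exact absurd hx (Fin.succ_ne_zero l).symm
    · intro hx
      by_cases hlk : (l : ℕ) < k
      · rw [dif_pos hlk] at hx
        have h : ∃ i, x ∈ X i := ⟨⟨l.1, hlk⟩, hx⟩
        rw [dif_pos h]
        have : h.choose = ⟨l.1, hlk⟩ := by
          by_contra hne
          exact Finset.disjoint_left.mp (dX _ _ hne) h.choose_spec hx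
        rw [this]
        exact congrArg Fin.succ (Fin.ext rfl)
      · rw [dif_neg hlk] at hx
        exact absurd hx (Finset.notMem_empty x)
  have fibB_eq : ∀ l : Fin n, fibB n b l =
      if h : (l : ℕ) < k then Y ⟨l.1, h⟩ else ∅ := by
    intro l
    ext y
    simp only [fibB, Finset.mem_filter, Finset.mem_univ, true_and, hb]
    constructor
    · intro hy
      by_cases h : ∃ j, y ∈ Y j
      · rw [dif_pos h] at hy
        have h1 : (h.choose.castLE hk) = l := Fin.succ_injective _ hy
        have hlk : (l : ℕ) < k := by
          rw [← h1]; exact h.choose.2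
        rw [dif_pos hlk]
        have : h.choose = ⟨l.1, hlk⟩ := by
          apply Fin.ext
          simpa using congrArg Fin.val h1
        exact this ▸ h.choose_spec
      · rw [dif_neg h] at hy
        exact absurd hy (by simp [eq_comm, Fin.succ_ne_zero])
    · intro hy
      by_cases hlk : (l : ℕ) < k
      · rw [dif_pos hlk] at hy
        have h : ∃ j, y ∈ Y j := ⟨⟨l.1, hlk⟩, hy⟩
        rw [dif_pos h]
        have : h.choose = ⟨l.1, hlk⟩ := by
          by_contra hne
          exact Finset.disjoint_left.mp (dY _ _ hne) h.choose_spec hy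
        rw [this]
        exact congrArg Fin.succ (Fin.ext rfl)
      · rw [dif_neg hlk] at hy
        exact absurd hy (Finset.notMem_empty y)
  have goodT_eq : goodT m n a b = Finset.univ.filter (fun l : Fin n => (l : ℕ) < k) := by
    apply Finset.filter_congr
    intro l _
    simp only [fibA_eq, fibB_eq]
    by_cases hlk : (l : ℕ) < k
    · simp [hlk, hX, hY]
    · simp [hlk]
  have cardT : k ≤ (goodT m n a b).card := by
    rw [goodT_eq]
    have hle : (Finset.univ : Finset (Fin k)).card ≤
        (Finset.univ.filter (fun l : Fin n => (l : ℕ) < k)).card := by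
      apply Finset.card_le_card_of_injOn (fun i => Fin.castLE hk i)
      · intro i _
        simp only [Finset.mem_coe, Finset.mem_filter, Finset.mem_univ, true_and, Fin.coe_castLE]
        exact i.2
      · intro i _ j _ hij
        exact Fin.castLE_injective hk hij
    simpa using hle
  refine ⟨a, b, ⟨⟨fun l => ?_, le_trans ht cardT⟩, fun l hl l' hl' => ?_⟩⟩
  · rw [fibA_eq, fibB_eq]
    by_cases hlk : (l : ℕ) < k
    · simp [hlk, cX, cY]
    · simp [hlk]
  · rw [goodT_eq, Finset.mem_filter] at hl hl'
    rw [fibA_eq, fibB_eq, dif_pos hl.2, dif_pos hl'.2]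
    exact hbad _ _

/-- With `p(n) = n^{-δ}` and `m(n) = ⌊Cn⌋`, the probability that in
`G(m(n), n, p(n))` there exist pairwise disjoint nonempty sets
`X_1,…,X_k ⊆ A`, `Y_1,…,Y_k ⊆ B` with `k ≥ εn`, all of size at most `f`, such
that no pair `(i,j)` has `X_i` completely joined to `Y_j`, is at most
`exp(ln((C+1)n+1)·(C+1)n − ε²·n^{2−f²δ})`, which tends to `0` as `n → ∞`. -/
theorem stmt5 (ε C : ℝ) (hε : 0 < ε ∧ ε < 1) (hC : 1 ≤ C) (f : ℕ) (δ : ℝ)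
    (hδ : 0 < δ ∧ δ < 1) (hfδ : (f : ℝ) ^ 2 * δ < 1) :
    (∀ n : ℕ, 0 < n →
      bipRandom (⌊C * n⌋₊) n (ENNReal.ofReal ((n : ℝ) ^ (-δ)))
          {ω | ∃ k : ℕ, ε * n ≤ k ∧
            ∃ (X : Fin k → Finset (Fin ⌊C * n⌋₊)) (Y : Fin k → Finset (Fin n)),
              (∀ i, (X i).Nonempty) ∧ (∀ j, (Y j).Nonempty) ∧
              (∀ i j, i ≠ j → Disjoint (X i) (X j)) ∧
              (∀ i j, i ≠ j → Disjoint (Y i) (Y j)) ∧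
              (∀ i, (X i).card ≤ f) ∧ (∀ j, (Y j).card ≤ f) ∧
              ∀ i j, ∃ x ∈ X i, ∃ y ∈ Y j, ω (x, y) = false}
        ≤ ENNReal.ofReal (Real.exp
            (Real.log ((C + 1) * n + 1) * ((C + 1) * n)
              - ε ^ 2 * (n : ℝ) ^ (2 - (f : ℝ) ^ 2 * δ)))) ∧
    Filter.Tendsto
      (fun n : ℕ => Real.exp
        (Real.log ((C + 1) * n + 1) * ((C + 1) * n)
          - ε ^ 2 * (n : ℝ) ^ (2 - (f : ℝ) ^ 2 * δ)))
      Filter.atTop (nhds 0) := by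
  classical
  constructor
  · intro n hn
    set m := ⌊C * (n : ℝ)⌋₊ with hm
    set t := ⌈ε * (n : ℝ)⌉₊ with htdef
    set p := ENNReal.ofReal ((n : ℝ) ^ (-δ)) with hpdef
    have hn1 : (1 : ℝ) ≤ n := by exact_mod_cast hn
    have hn0 : (0 : ℝ) < n := by linarith
    set r := (n : ℝ) ^ (-δ) with hrdef
    have hr0 : 0 < r := Real.rpow_pos_of_pos hn0 _
    have hr1 : r ≤ 1 := Real.rpow_le_one_of_one_le_of_nonpos hn1 (by linarith [hδ.1])
    have hp1 : p ≤ 1 := ENNReal.ofReal_le_one.mpr hr1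
    -- union bound
    have hsub : {ω : (Fin m × Fin n) → Bool | ∃ k : ℕ, ε * n ≤ k ∧
            ∃ (X : Fin k → Finset (Fin m)) (Y : Fin k → Finset (Fin n)),
              (∀ i, (X i).Nonempty) ∧ (∀ j, (Y j).Nonempty) ∧
              (∀ i j, i ≠ j → Disjoint (X i) (X j)) ∧
              (∀ i j, i ≠ j → Disjoint (Y i) (Y j)) ∧
              (∀ i, (X i).card ≤ f) ∧ (∀ j, (Y j).card ≤ f) ∧
              ∀ i j, ∃ x ∈ X i, ∃ y ∈ Y j, ω (x, y) = false}
        ⊆ ⋃ ab ∈ (Finset.univ : Finset ((Fin m → Fin (n+1)) × (Fin n → Fin (n+1)))),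
            badEvent m n f t ab.1 ab.2 := by
      rintro ω ⟨k, hk, X, Y, hX, hY, dX, dY, cX, cY, hbad⟩
      have hkn : k ≤ n := by
        have hinj : Function.Injective (fun j : Fin k => (hY j).choose) := by
          intro j j' hjj
          by_contra hne
          have hjj' : (hY j).choose = (hY j').choose := hjj
          have h2 := (hY j').choose_spec
          rw [← hjj'] at h2
          exact Finset.disjoint_left.mp (dY j j' hne) ((hY j).choose_spec) h2
        simpa using Fintype.card_le_of_injective _ hinj
      have ht : t ≤ k := Nat.ceil_le.mpr hk
      obtain ⟨a, b, hab⟩ := exists_labeling hkn ht X Y hX hY dX dY cX cY ω hbad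
      exact Set.mem_biUnion (Finset.mem_univ (a, b)) hab
    have hbound : ∀ ab : (Fin m → Fin (n+1)) × (Fin n → Fin (n+1)),
        bipRandom m n p (badEvent m n f t ab.1 ab.2)
          ≤ ENNReal.ofReal (Real.exp (-(ε ^ 2 * (n : ℝ) ^ (2 - (f : ℝ) ^ 2 * δ)))) := by
      intro ab
      refine le_trans (labeling_bound m n f t p hp1 ab.1 ab.2) ?_
      set s := r ^ (f * f) with hsdef
      have hs0 : 0 < s := pow_pos hr0 _
      have hs1 : s ≤ 1 := pow_le_one₀ hr0.le hr1
      have hps : p ^ (f * f) = ENNReal.ofReal s := by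
        rw [hpdef, ← ENNReal.ofReal_pow hr0.le]
      have h1s : (1 : ℝ≥0∞) - p ^ (f * f) = ENNReal.ofReal (1 - s) := by
        rw [hps, ENNReal.ofReal_sub 1 hs0.le, ENNReal.ofReal_one]
      rw [h1s, ← ENNReal.ofReal_pow (by linarith)]
      apply ENNReal.ofReal_le_ofReal
      have hstep1 : (1 - s) ^ (t * t) ≤ Real.exp (-s) ^ (t * t) := by
        apply pow_le_pow_left₀ (by linarith)
        linarith [Real.add_one_le_exp (-s)]
      have hstep2 : Real.exp (-s) ^ (t * t) = Real.exp (-(s * (t * t : ℕ))) := by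
        rw [← Real.exp_nat_mul]
        ring_nf
      have hkey : ε ^ 2 * (n : ℝ) ^ (2 - (f : ℝ) ^ 2 * δ) ≤ s * (t * t : ℕ) := by
        have hsA : s = (n : ℝ) ^ (-((f : ℝ) ^ 2 * δ)) := by
          rw [hsdef, hrdef, ← Real.rpow_natCast ((n:ℝ) ^ (-δ)) (f * f),
            ← Real.rpow_mul hn0.le]
          congr 1
          push_cast
          ring
        have hsplit : (n : ℝ) ^ (2 - (f : ℝ) ^ 2 * δ)
            = (n : ℝ) ^ (-((f : ℝ) ^ 2 * δ)) * (n : ℝ) ^ (2 : ℝ) := by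
          rw [← Real.rpow_add hn0]
          congr 1
          ring
        have htge : ε * n ≤ (t : ℝ) := Nat.le_ceil _
        have htsq : (ε * n) ^ 2 ≤ ((t : ℕ) : ℝ) ^ 2 := by
          exact pow_le_pow_left₀ (mul_nonneg hε.1.le hn0.le) htge 2
        have hA0 : (0 : ℝ) ≤ (n : ℝ) ^ (-((f : ℝ) ^ 2 * δ)) :=
          (Real.rpow_pos_of_pos hn0 _).le
        calc ε ^ 2 * (n : ℝ) ^ (2 - (f : ℝ) ^ 2 * δ)
            = (n : ℝ) ^ (-((f : ℝ) ^ 2 * δ)) * (ε * n) ^ 2 := by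
              rw [hsplit, Real.rpow_two]; ring
          _ ≤ (n : ℝ) ^ (-((f : ℝ) ^ 2 * δ)) * ((t : ℕ) : ℝ) ^ 2 := by
              exact mul_le_mul_of_nonneg_left htsq hA0
          _ = s * (t * t : ℕ) := by
              rw [hsA]; push_cast; ring
      calc (1 - s) ^ (t * t) ≤ Real.exp (-s) ^ (t * t) := hstep1
        _ = Real.exp (-(s * (t * t : ℕ))) := hstep2
        _ ≤ Real.exp (-(ε ^ 2 * (n : ℝ) ^ (2 - (f : ℝ) ^ 2 * δ))) := by
            apply Real.exp_le_exp.mpr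
            linarith
    calc bipRandom m n p {ω : (Fin m × Fin n) → Bool | ∃ k : ℕ, ε * n ≤ k ∧
            ∃ (X : Fin k → Finset (Fin m)) (Y : Fin k → Finset (Fin n)),
              (∀ i, (X i).Nonempty) ∧ (∀ j, (Y j).Nonempty) ∧
              (∀ i j, i ≠ j → Disjoint (X i) (X j)) ∧
              (∀ i j, i ≠ j → Disjoint (Y i) (Y j)) ∧
              (∀ i, (X i).card ≤ f) ∧ (∀ j, (Y j).card ≤ f) ∧
              ∀ i j, ∃ x ∈ X i, ∃ y ∈ Y j, ω (x, y) = false}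
        ≤ bipRandom m n p (⋃ ab ∈ (Finset.univ : Finset ((Fin m → Fin (n+1)) × (Fin n → Fin (n+1)))),
            badEvent m n f t ab.1 ab.2) := measure_mono hsub
      _ ≤ ∑ ab ∈ (Finset.univ : Finset ((Fin m → Fin (n+1)) × (Fin n → Fin (n+1)))),
            bipRandom m n p (badEvent m n f t ab.1 ab.2) := measure_biUnion_finset_le _ _
      _ ≤ ∑ _ab ∈ (Finset.univ : Finset ((Fin m → Fin (n+1)) × (Fin n → Fin (n+1)))),
            ENNReal.ofReal (Real.exp (-(ε ^ 2 * (n : ℝ) ^ (2 - (f : ℝ) ^ 2 * δ)))) :=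
          Finset.sum_le_sum fun ab _ => hbound ab
      _ = ((n+1) ^ m * (n+1) ^ n : ℕ) *
            ENNReal.ofReal (Real.exp (-(ε ^ 2 * (n : ℝ) ^ (2 - (f : ℝ) ^ 2 * δ)))) := by
          rw [Finset.sum_const, nsmul_eq_mul]
          congr 1
          simp [Fintype.card_fun]
      _ ≤ ENNReal.ofReal (Real.exp
            (Real.log ((C + 1) * n + 1) * ((C + 1) * n)
              - ε ^ 2 * (n : ℝ) ^ (2 - (f : ℝ) ^ 2 * δ))) := by
          rw [← ENNReal.ofReal_natCast, ← ENNReal.ofReal_mul (by positivity)]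
          apply ENNReal.ofReal_le_ofReal
          rw [Real.exp_sub]
          have hcount : (((n+1) ^ m * (n+1) ^ n : ℕ) : ℝ)
              ≤ Real.exp (Real.log ((C + 1) * n + 1) * ((C + 1) * n)) := by
            push_cast
            rw [← pow_add]
            have h1 : ((n : ℝ) + 1) ^ (m + n) =
                Real.exp ((m + n : ℕ) * Real.log ((n : ℝ) + 1)) := by
              conv_lhs => rw [← Real.exp_log (show (0:ℝ) < (n:ℝ)+1 by positivity)]
              rw [← Real.exp_nat_mul]
            rw [h1]
            apply Real.exp_le_exp.mpr
            have hlog1 : Real.log ((n : ℝ) + 1) ≤ Real.log ((C + 1) * n + 1) := by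
              apply Real.log_le_log (by positivity)
              nlinarith
            have hlog0 : 0 ≤ Real.log ((n : ℝ) + 1) := Real.log_nonneg (by linarith)
            have hmn : ((m + n : ℕ) : ℝ) ≤ (C + 1) * n := by
              push_cast
              have : (m : ℝ) ≤ C * n := by
                rw [hm]
                exact (Nat.floor_le (by positivity))
              linarith
            have hmn0 : (0 : ℝ) ≤ ((m + n : ℕ) : ℝ) := by positivity
            calc ((m + n : ℕ) : ℝ) * Real.log ((n : ℝ) + 1)
                ≤ ((m + n : ℕ) : ℝ) * Real.log ((C + 1) * n + 1) :=
                  mul_le_mul_of_nonneg_left hlog1 hmn0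
              _ ≤ ((C + 1) * n) * Real.log ((C + 1) * n + 1) := by
                  apply mul_le_mul_of_nonneg_right hmn
                  exact le_trans hlog0 hlog1
              _ = Real.log ((C + 1) * n + 1) * ((C + 1) * n) := by ring
          have hpos : (0 : ℝ) < Real.exp (-(ε ^ 2 * (n : ℝ) ^ (2 - (f : ℝ) ^ 2 * δ))) :=
            Real.exp_pos _
          calc (((n+1) ^ m * (n+1) ^ n : ℕ) : ℝ) *
                Real.exp (-(ε ^ 2 * (n : ℝ) ^ (2 - (f : ℝ) ^ 2 * δ)))
              ≤ Real.exp (Real.log ((C + 1) * n + 1) * ((C + 1) * n)) *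
                Real.exp (-(ε ^ 2 * (n : ℝ) ^ (2 - (f : ℝ) ^ 2 * δ))) :=
                mul_le_mul_of_nonneg_right hcount hpos.le
            _ = Real.exp (Real.log ((C + 1) * n + 1) * ((C + 1) * n)) /
                Real.exp (ε ^ 2 * (n : ℝ) ^ (2 - (f : ℝ) ^ 2 * δ)) := by
                rw [Real.exp_neg]; ring
  · set α := 2 - (f : ℝ) ^ 2 * δ with hα
    have hα1 : 1 < α := by rw [hα]; linarith
    set γ := (α - 1) / 2 with hγdef
    have hγ : 0 < γ := by rw [hγdef]; linarith
    have hαγ : α = 2 * γ + 1 := by rw [hγdef]; ring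
    set K := (C + 2) ^ γ * (C + 1) / γ with hK
    have hCn : (0 : ℝ) < C + 1 := by linarith
    have htend1 : Filter.Tendsto (fun n : ℕ => (ε ^ 2 / 2) * (n : ℝ) ^ γ)
        Filter.atTop Filter.atTop :=
      Filter.Tendsto.const_mul_atTop (div_pos (pow_pos hε.1 2) two_pos)
        ((tendsto_rpow_atTop hγ).comp tendsto_natCast_atTop_atTop)
    have hev : ∀ᶠ n : ℕ in Filter.atTop,
        Real.log ((C + 1) * n + 1) * ((C + 1) * n) - ε ^ 2 * (n : ℝ) ^ α
          ≤ -((ε ^ 2 / 2) * (n : ℝ) ^ α) := by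
      filter_upwards [htend1.eventually_ge_atTop K, Filter.eventually_ge_atTop 1]
        with n hKn hn1'
      have hn1 : (1 : ℝ) ≤ n := by exact_mod_cast hn1'
      have hn0 : (0 : ℝ) < n := by linarith
      have hlog : Real.log ((C + 1) * n + 1) ≤ (C + 2) ^ γ * (n : ℝ) ^ γ / γ := by
        calc Real.log ((C + 1) * n + 1) ≤ ((C + 1) * n + 1) ^ γ / γ :=
              Real.log_le_rpow_div (by positivity) hγ
          _ ≤ ((C + 2) * n) ^ γ / γ := by
              have harg : (C + 1) * n + 1 ≤ (C + 2) * n := by nlinarith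
              exact (div_le_div_iff_of_pos_right hγ).mpr (Real.rpow_le_rpow (by positivity) harg hγ.le)
          _ = (C + 2) ^ γ * (n : ℝ) ^ γ / γ := by
              rw [Real.mul_rpow (by linarith) hn0.le]
      have hnγ1 : (n:ℝ) ^ γ * (n:ℝ) = (n:ℝ) ^ (γ + 1) := by
        rw [Real.rpow_add hn0, Real.rpow_one]
      have hnα : (n:ℝ) ^ γ * (n:ℝ) ^ (γ + 1) = (n:ℝ) ^ α := by
        rw [← Real.rpow_add hn0, hαγ]
        ring_nf
      have h2 : Real.log ((C + 1) * n + 1) * ((C + 1) * n) ≤ K * ((n:ℝ) ^ (γ + 1)) := by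
        calc Real.log ((C + 1) * n + 1) * ((C + 1) * n)
            ≤ ((C + 2) ^ γ * (n : ℝ) ^ γ / γ) * ((C + 1) * n) :=
              mul_le_mul_of_nonneg_right hlog (by positivity)
          _ = K * ((n:ℝ) ^ γ * n) := by rw [hK]; ring
          _ = K * ((n:ℝ) ^ (γ + 1)) := by rw [hnγ1]
      have h3 : K * ((n:ℝ) ^ (γ + 1)) ≤ (ε ^ 2 / 2) * (n:ℝ) ^ α := by
        calc K * ((n:ℝ) ^ (γ + 1)) ≤ ((ε ^ 2 / 2) * (n:ℝ) ^ γ) * ((n:ℝ) ^ (γ + 1)) :=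
              mul_le_mul_of_nonneg_right hKn (by positivity)
          _ = (ε ^ 2 / 2) * ((n:ℝ) ^ γ * (n:ℝ) ^ (γ + 1)) := by ring
          _ = (ε ^ 2 / 2) * (n:ℝ) ^ α := by rw [hnα]
      linarith
    have htendα : Filter.Tendsto (fun n : ℕ => -((ε ^ 2 / 2) * (n : ℝ) ^ α))
        Filter.atTop Filter.atBot := by
      apply Filter.tendsto_neg_atTop_atBot.comp
      exact Filter.Tendsto.const_mul_atTop (div_pos (pow_pos hε.1 2) two_pos)
        ((tendsto_rpow_atTop (by linarith)).comp tendsto_natCast_atTop_atTop)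
    have hL : Filter.Tendsto (fun n : ℕ =>
        Real.log ((C + 1) * n + 1) * ((C + 1) * n) - ε ^ 2 * (n : ℝ) ^ α)
        Filter.atTop Filter.atBot :=
      Filter.tendsto_atBot_mono' _ hev htendα
    exact Real.tendsto_exp_atBot.comp hL
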